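/- Let m, n be distinct positive integers and let t > 0 be real. Consider N_t(X) = X^m(X^n − 1)² − t²·X^n(X^m − 1)² ∈ ℝ[X]. Then 1 is a root of N_t of multiplicity exactly 2 if t ≠ n/m, and of multiplicity exactly 4 if t = n/m. -/

import Mathlib

open Polynomial

noncomputable def gg (k : ℕ) : ℝ[X] := ∑ i ∈ Finset.range k, X ^ i

lemma gg_eval (k : ℕ) : (gg k).eval 1 = k := by
  simp [gg, eval_finset_sum]

lemma gg_mul (k : ℕ) : gg k * (X - 1) = X ^ k - 1 := geom_sum_mul X k

lemma gg_d1 (k : ℕ) : (derivative (gg k)).eval 1 = ∑ i ∈ Finset.range k, (i : ℝ) := by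
  simp [gg, derivative_sum, derivative_X_pow, eval_finset_sum]

lemma gg_d2 (k : ℕ) :
    (derivative (derivative (gg k))).eval 1
      = ∑ i ∈ Finset.range k, (i : ℝ) * ((i : ℝ) - 1) := by
  simp only [gg, derivative_sum, derivative_X_pow, derivative_mul, derivative_natCast,
    derivative_C]
  rw [eval_finset_sum]
  refine Finset.sum_congr rfl fun i _ => ?_
  rcases i with _ | i
  · simp
  · simp [eval_mul, eval_pow]

lemma sum1 (k : ℕ) : 2 * ∑ i ∈ Finset.range k, (i : ℝ) = k * (k - 1) := by
  induction k with
  | zero => simp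
  | succ k ih =>
    rw [Finset.sum_range_succ]
    push_cast
    push_cast at ih
    ring_nf
    ring_nf at ih
    nlinarith [ih]

lemma sum2 (k : ℕ) :
    3 * ∑ i ∈ Finset.range k, (i : ℝ) * ((i : ℝ) - 1) = k * (k - 1) * (k - 2) := by
  induction k with
  | zero => simp
  | succ k ih =>
    rw [Finset.sum_range_succ]
    push_cast
    push_cast at ih
    nlinarith [ih]

lemma rm_two {p : ℝ[X]} (h0 : p.eval 1 = 0) (h1 : (derivative p).eval 1 = 0)
    (h2 : (derivative (derivative p)).eval 1 ≠ 0) :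
    p.rootMultiplicity 1 = 2 := by
  have hp2 : derivative (derivative p) ≠ 0 := fun h => h2 (by simp [h])
  have hp1 : derivative p ≠ 0 := fun h => hp2 (by simp [h])
  have hp : p ≠ 0 := fun h => hp1 (by simp [h])
  have e1 : (derivative p).rootMultiplicity 1 = p.rootMultiplicity 1 - 1 :=
    derivative_rootMultiplicity_of_root h0
  have e2 : (derivative (derivative p)).rootMultiplicity 1
      = (derivative p).rootMultiplicity 1 - 1 :=
    derivative_rootMultiplicity_of_root h1
  have z : (derivative (derivative p)).rootMultiplicity 1 = 0 :=
    rootMultiplicity_eq_zero h2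
  have g1 : 0 < p.rootMultiplicity 1 := (rootMultiplicity_pos hp).2 h0
  have g2 : 0 < (derivative p).rootMultiplicity 1 := (rootMultiplicity_pos hp1).2 h1
  omega

lemma Qeval (m n : ℕ) (c : ℝ) :
    ((X : ℝ[X]) ^ m * (gg n) ^ 2 - C c * ((X:ℝ[X]) ^ n * (gg m) ^ 2)).eval 1
      = (n:ℝ)^2 - c * (m:ℝ)^2 := by
  simp [gg_eval]

lemma Qeval1 (m n : ℕ) (c : ℝ) :
    (derivative ((X : ℝ[X]) ^ m * (gg n) ^ 2 - C c * ((X:ℝ[X]) ^ n * (gg m) ^ 2))).eval 1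
      = (m:ℝ) * (n:ℝ)^2 + 2 * n * (derivative (gg n)).eval 1
        - c * ((n:ℝ) * (m:ℝ)^2 + 2 * m * (derivative (gg m)).eval 1) := by
  simp [derivative_mul, derivative_pow, derivative_X_pow, gg_eval]


lemma gg_sq_d1 (k : ℕ) : (derivative ((gg k) ^ 2)).eval 1 = 2 * k * (derivative (gg k)).eval 1 := by
  rw [derivative_pow]
  simp [gg_eval]

lemma Qeval2 (m n : ℕ) (hm : 0 < m) (hn : 0 < n) (c : ℝ) :
    (derivative (derivative
        ((X : ℝ[X]) ^ m * (gg n) ^ 2 - C c * ((X:ℝ[X]) ^ n * (gg m) ^ 2)))).eval 1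
      = (m:ℝ) * ((m:ℝ) - 1) * (n:ℝ)^2 + 4 * m * n * (derivative (gg n)).eval 1
          + 2 * ((derivative (gg n)).eval 1)^2 + 2 * n * (derivative (derivative (gg n))).eval 1
        - c * ((n:ℝ) * ((n:ℝ) - 1) * (m:ℝ)^2 + 4 * n * m * (derivative (gg m)).eval 1
          + 2 * ((derivative (gg m)).eval 1)^2
          + 2 * m * (derivative (derivative (gg m))).eval 1) := by
  simp only [derivative_sub, derivative_mul, derivative_pow, derivative_X_pow, derivative_C,
    derivative_natCast]
  simp [gg_eval, gg_sq_d1]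
  simp [derivative_X_pow]
  rw [Nat.cast_sub hm, Nat.cast_sub hn]
  push_cast
  ring

/-- For distinct positive integers `m, n` and real `t > 0`, the root `1` of
`N_t(X) = X^m(X^n − 1)² − t² X^n(X^m − 1)² ∈ ℝ[X]` has multiplicity exactly `2` if
`t ≠ n/m`, and exactly `4` if `t = n/m`. -/
theorem rootMultiplicity_one_N (m n : ℕ) (hm : 0 < m) (hn : 0 < n) (hmn : m ≠ n)
    (t : ℝ) (ht : 0 < t) :
    Polynomial.rootMultiplicity (1 : ℝ)
        ((X : Polynomial ℝ) ^ m * ((X : Polynomial ℝ) ^ n - 1) ^ 2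
          - Polynomial.C (t ^ 2) * (X : Polynomial ℝ) ^ n * ((X : Polynomial ℝ) ^ m - 1) ^ 2)
      = if t = (n : ℝ) / (m : ℝ) then 4 else 2 := by

  have hm0 : (m : ℝ) ≠ 0 := Nat.cast_ne_zero.2 hm.ne'
  have hn0 : (n : ℝ) ≠ 0 := Nat.cast_ne_zero.2 hn.ne'
  have hmn' : (m : ℝ) ≠ (n : ℝ) := fun h => hmn (Nat.cast_injective h)
  set Q : ℝ[X] := (X : ℝ[X]) ^ m * (gg n) ^ 2 - C (t^2) * ((X:ℝ[X]) ^ n * (gg m) ^ 2) with hQdef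
  have hfac : (X : Polynomial ℝ) ^ m * ((X : Polynomial ℝ) ^ n - 1) ^ 2
          - Polynomial.C (t ^ 2) * (X : Polynomial ℝ) ^ n * ((X : Polynomial ℝ) ^ m - 1) ^ 2
        = ((X : ℝ[X]) - C 1) ^ 2 * Q := by
    rw [← gg_mul n, ← gg_mul m, hQdef]
    simp only [map_one]
    ring
  have han : (derivative (gg n)).eval 1 = (n:ℝ)*((n:ℝ)-1)/2 := by
    have := sum1 n; rw [gg_d1]; linarith
  have ham : (derivative (gg m)).eval 1 = (m:ℝ)*((m:ℝ)-1)/2 := by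
    have := sum1 m; rw [gg_d1]; linarith
  have hbn : (derivative (derivative (gg n))).eval 1 = (n:ℝ)*((n:ℝ)-1)*((n:ℝ)-2)/3 := by
    have := sum2 n; rw [gg_d2]; linarith
  have hbm : (derivative (derivative (gg m))).eval 1 = (m:ℝ)*((m:ℝ)-1)*((m:ℝ)-2)/3 := by
    have := sum2 m; rw [gg_d2]; linarith
  rw [hfac]
  by_cases htm : t = (n : ℝ) / (m : ℝ)
  · rw [if_pos htm]
    subst htm
    have h2 : (derivative (derivative Q)).eval 1 ≠ 0 := by
      have hE := Qeval2 m n hm hn (((n : ℝ) / (m : ℝ))^2)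
      rw [han, ham, hbn, hbm] at hE
      rw [hQdef, hE]
      have hval : ((m:ℝ) * ((m:ℝ) - 1) * (n:ℝ)^2 + 4 * m * n * ((n:ℝ)*((n:ℝ)-1)/2)
          + 2 * ((n:ℝ)*((n:ℝ)-1)/2)^2 + 2 * n * ((n:ℝ)*((n:ℝ)-1)*((n:ℝ)-2)/3)
        - ((n : ℝ) / (m : ℝ))^2 * ((n:ℝ) * ((n:ℝ) - 1) * (m:ℝ)^2
          + 4 * n * m * ((m:ℝ)*((m:ℝ)-1)/2)
          + 2 * ((m:ℝ)*((m:ℝ)-1)/2)^2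
          + 2 * m * ((m:ℝ)*((m:ℝ)-1)*((m:ℝ)-2)/3)))
          = (n:ℝ)^2 * ((n:ℝ)^2 - (m:ℝ)^2) / 6 := by
        field_simp
        ring
      rw [hval]
      have : (n:ℝ)^2 - (m:ℝ)^2 ≠ 0 := by
        intro h
        have : ((n:ℝ) - m) * ((n:ℝ) + m) = 0 := by linarith
        rcases mul_eq_zero.1 this with h' | h'
        · exact hmn' (by linarith)
        · have : (0:ℝ) < (n:ℝ) + m := by positivity
          linarith
      positivity
    have hQne : Q ≠ 0 := fun h => h2 (by simp [h])
    rw [rootMultiplicity_mul (mul_ne_zero (pow_ne_zero _ (X_sub_C_ne_zero (1:ℝ))) hQne),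
      rootMultiplicity_X_sub_C_pow]
    have hrm2 : Q.rootMultiplicity 1 = 2 := by
      apply rm_two
      · rw [hQdef, Qeval]
        field_simp
        ring
      · have hE := Qeval1 m n (((n : ℝ) / (m : ℝ))^2)
        rw [han, ham] at hE
        rw [hQdef, hE]
        field_simp
        ring
      · exact h2
    rw [hrm2]
  · rw [if_neg htm]
    have h0 : Q.eval 1 ≠ 0 := by
      rw [hQdef, Qeval]
      intro h
      have h1 : (t * m - n) * (t * m + n) = 0 := by ring_nf; nlinarith [h]
      rcases mul_eq_zero.1 h1 with h' | h'
      · apply htm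
        field_simp
        linarith
      · have : (0:ℝ) < t * m + n := by positivity
        linarith
    have hQne : Q ≠ 0 := fun h => h0 (by simp [h])
    rw [rootMultiplicity_mul (mul_ne_zero (pow_ne_zero _ (X_sub_C_ne_zero (1:ℝ))) hQne),
      rootMultiplicity_X_sub_C_pow, rootMultiplicity_eq_zero h0]
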